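/- Let c > 0 and let N be a non-negative integer. There exists a constant C = C(N, c) > 0 such that for every real H ≥ 1, every Lebesgue measurable set 𝒮 ⊆ [−c,c]², and every (ξ₁, ξ₂) ∈ ℝ² with max{|ξ₁|, |ξ₂|} > 0, the Fourier transforms W₊ and W₋ of w₊ and w₋ satisfy |W₊(ξ₁, ξ₂)| ≤ C·H^{2N}·max{|ξ₁|, |ξ₂|}^{−N} and |W₋(ξ₁, ξ₂)| ≤ C·H^{2N}·max{|ξ₁|, |ξ₂|}^{−N}. -/

import Mathlib

open MeasureTheory Metric Complex
open scoped RealInnerProductSpace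

local notation "V" => EuclideanSpace ℝ (Fin 2)


/-- `S₊`: the union of closed balls of radius `1/√H` centred at points of `S`. -/
noncomputable def Splus (H : ℝ) (S : Set (EuclideanSpace ℝ (Fin 2))) :
    Set (EuclideanSpace ℝ (Fin 2)) :=
  ⋃ x ∈ S, Metric.closedBall x (1 / Real.sqrt H)

/-- `S₋`: the complement of the union of closed balls of radius `1/√H` centred
at points not in `S`. -/
noncomputable def Sminus (H : ℝ) (S : Set (EuclideanSpace ℝ (Fin 2))) :
    Set (EuclideanSpace ℝ (Fin 2)) :=
  (⋃ x ∈ Sᶜ, Metric.closedBall x (1 / Real.sqrt H))ᶜ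

/-- The smoothed weight `w₊`. -/
noncomputable def wplus (H : ℝ) (S : Set (EuclideanSpace ℝ (Fin 2)))
    (x : EuclideanSpace ℝ (Fin 2)) : ℝ :=
  H ^ 2 / Real.pi * ∫ y in Splus H S, Real.exp (-(‖y - x‖ ^ 2 * H ^ 2))

/-- The smoothed weight `w₋`. -/
noncomputable def wminus (H : ℝ) (S : Set (EuclideanSpace ℝ (Fin 2)))
    (x : EuclideanSpace ℝ (Fin 2)) : ℝ :=
  H ^ 2 / Real.pi * ∫ y in Sminus H S, Real.exp (-(‖y - x‖ ^ 2 * H ^ 2))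

/-- The Fourier transform `W(ξ₁,ξ₂) = ∫ w(u,v) e^{−2πi(uξ₁ + vξ₂)} du dv` of a
function `w : ℝ² → ℝ`. -/
noncomputable def fourierW (w : EuclideanSpace ℝ (Fin 2) → ℝ) (ξ₁ ξ₂ : ℝ) : ℂ :=
  ∫ y : EuclideanSpace ℝ (Fin 2),
    (w y : ℂ) * Complex.exp (-(2 * Real.pi * Complex.I * ((y 0 * ξ₁ + y 1 * ξ₂ : ℝ) : ℂ)))


lemma pow_le_factorial_mul_exp (N : ℕ) {x : ℝ} (hx : 0 ≤ x) :
    x ^ N ≤ (Nat.factorial N) * Real.exp x := by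
  have h1 : x ^ N / (Nat.factorial N) ≤ ∑ i ∈ Finset.range (N + 1), x ^ i / (Nat.factorial i) :=
    Finset.single_le_sum (f := fun i => x ^ i / (Nat.factorial i))
      (fun i _ => by positivity) (Finset.self_mem_range_succ N)
  have h2 : (∑ i ∈ Finset.range (N + 1), x ^ i / (Nat.factorial i)) ≤ Real.exp x :=
    Real.sum_le_exp_of_nonneg hx _
  have hN : (0 : ℝ) < (Nat.factorial N) := by positivity
  have := (h1.trans h2)
  rw [div_le_iff₀ hN] at this
  linarith [this]

lemma exp_decay_bound (N : ℕ) {H M : ℝ} (hH : 1 ≤ H) (hM : 0 < M) :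
    Real.exp (-(Real.pi ^ 2 * M ^ 2 / H ^ 2)) ≤
      ((Nat.factorial N) + 1 : ℝ) * H ^ (2 * N) / M ^ N := by
  have hH0 : 0 < H := lt_of_lt_of_le one_pos hH
  rw [le_div_iff₀ (pow_pos hM N)]
  set t : ℝ := M / H with ht
  have ht0 : 0 < t := div_pos hM hH0
  have hMt : M = t * H := (div_mul_cancel₀ M hH0.ne').symm
  have hsq : Real.pi ^ 2 * M ^ 2 / H ^ 2 = Real.pi ^ 2 * t ^ 2 := by
    rw [hMt]; field_simp
  have key : t ^ N * Real.exp (-(Real.pi ^ 2 * t ^ 2)) ≤ ((Nat.factorial N) + 1 : ℝ) := by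
    have hfac : (0:ℝ) < (Nat.factorial N) := by positivity
    rcases le_total t 1 with h | h
    · have h1 : t ^ N ≤ 1 := pow_le_one₀ ht0.le h
      have h2 : Real.exp (-(Real.pi ^ 2 * t ^ 2)) ≤ 1 :=
        Real.exp_le_one_iff.2 (neg_nonpos.2 (by positivity))
      nlinarith [Real.exp_pos (-(Real.pi ^ 2 * t ^ 2))]
    · have h9 : (9:ℝ) ≤ Real.pi ^ 2 := by nlinarith [Real.pi_gt_three]
      have ht2 : t ≤ t ^ 2 := by nlinarith
      have htt : t ≤ Real.pi ^ 2 * t ^ 2 := by nlinarith [sq_nonneg t]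
      have h1 : t ^ N ≤ (Real.pi ^ 2 * t ^ 2) ^ N := pow_le_pow_left₀ ht0.le htt N
      have h2 : (Real.pi ^ 2 * t ^ 2) ^ N ≤ (Nat.factorial N) * Real.exp (Real.pi ^ 2 * t ^ 2) :=
        pow_le_factorial_mul_exp N (by positivity)
      have h3 : t ^ N * Real.exp (-(Real.pi ^ 2 * t ^ 2)) ≤
          (Nat.factorial N) * Real.exp (Real.pi ^ 2 * t ^ 2) * Real.exp (-(Real.pi ^ 2 * t ^ 2)) := by
        have := Real.exp_pos (-(Real.pi ^ 2 * t ^ 2))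
        nlinarith
      rw [mul_assoc, ← Real.exp_add] at h3
      simp only [add_neg_cancel, Real.exp_zero, mul_one] at h3
      linarith
  calc Real.exp (-(Real.pi ^ 2 * M ^ 2 / H ^ 2)) * M ^ N
      = t ^ N * Real.exp (-(Real.pi ^ 2 * t ^ 2)) * H ^ N := by
        rw [hsq, hMt, mul_pow]; ring
    _ ≤ ((Nat.factorial N) + 1 : ℝ) * H ^ N := by
        exact mul_le_mul_of_nonneg_right key (pow_pos hH0 N).le
    _ ≤ ((Nat.factorial N) + 1 : ℝ) * H ^ (2 * N) := by
        have : H ^ N ≤ H ^ (2 * N) := pow_le_pow_right₀ hH (by omega)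
        have hpos : (0:ℝ) ≤ (Nat.factorial N) + 1 := by positivity
        exact mul_le_mul_of_nonneg_left this hpos

lemma restrict_hull {R : ℝ} (s : Set V) (hs : s ⊆ closedBall 0 R) :
    ∃ T : Set V, MeasurableSet T ∧ T ⊆ closedBall 0 R ∧
      volume.restrict s = volume.restrict T := by
  set T := toMeasurable volume s ∩ closedBall 0 R with hT
  have hfin : volume s ≠ ⊤ :=
    ((measure_mono hs).trans_lt measure_closedBall_lt_top).ne
  have hsubT : s ⊆ T := Set.subset_inter (subset_toMeasurable _ _) hs
  have hTsub : T ⊆ toMeasurable volume s := Set.inter_subset_left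
  have hTm : MeasurableSet T :=
    (measurableSet_toMeasurable _ _).inter measurableSet_closedBall
  have hμT : volume T = volume (toMeasurable volume s) := by
    apply le_antisymm (measure_mono hTsub)
    rw [measure_toMeasurable]
    exact measure_mono hsubT
  have hTfin : volume T ≠ ⊤ := by
    rw [hμT, measure_toMeasurable]; exact hfin
  have hdiff : volume (toMeasurable volume s \ T) = 0 := by
    rw [measure_diff hTsub hTm.nullMeasurableSet hTfin, hμT, tsub_self]
  refine ⟨T, hTm, Set.inter_subset_right, ?_⟩
  rw [← Measure.restrict_toMeasurable hfin]
  apply Measure.restrict_congr_set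
  rw [MeasureTheory.ae_eq_set]
  constructor
  · exact hdiff
  · rw [Set.diff_eq_empty.2 hTsub]; exact measure_empty


noncomputable def Ephase (ξ₁ ξ₂ : ℝ) (x : EuclideanSpace ℝ (Fin 2)) : ℂ :=
  Complex.exp (-(2 * Real.pi * Complex.I * ((x 0 * ξ₁ + x 1 * ξ₂ : ℝ) : ℂ)))

lemma fourierW_eq (w : V → ℝ) (ξ₁ ξ₂ : ℝ) :
    fourierW w ξ₁ ξ₂ = ∫ y : V, (w y : ℂ) * Ephase ξ₁ ξ₂ y := rfl

lemma Ephase_norm (ξ₁ ξ₂ : ℝ) (x : V) : ‖Ephase ξ₁ ξ₂ x‖ = 1 := by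
  rw [Ephase, Complex.norm_exp]
  have : (-(2 * (Real.pi:ℂ) * Complex.I * ((x 0 * ξ₁ + x 1 * ξ₂ : ℝ) : ℂ))).re = 0 := by
    simp [Complex.mul_re, Complex.mul_im]
  rw [this, Real.exp_zero]

lemma Ephase_cont (ξ₁ ξ₂ : ℝ) : Continuous (Ephase ξ₁ ξ₂) := by
  apply Complex.continuous_exp.comp
  apply Continuous.neg
  apply Continuous.mul continuous_const
  apply Complex.continuous_ofReal.comp
  exact ((EuclideanSpace.proj (0 : Fin 2) : V →L[ℝ] ℝ).continuous.mul continuous_const).add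
    ((EuclideanSpace.proj (1 : Fin 2) : V →L[ℝ] ℝ).continuous.mul continuous_const)

lemma Ephase_add (ξ₁ ξ₂ : ℝ) (x y : V) :
    Ephase ξ₁ ξ₂ (x + y) = Ephase ξ₁ ξ₂ x * Ephase ξ₁ ξ₂ y := by
  rw [Ephase, Ephase, Ephase, ← Complex.exp_add]
  congr 1
  have h0 : (x + y) 0 = x 0 + y 0 := rfl
  have h1 : (x + y) 1 = x 1 + y 1 := rfl
  rw [h0, h1]
  push_cast
  ring

lemma core (H : ℝ) (hH : 1 ≤ H) (T : Set V) (hT : MeasurableSet T)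
    (hfin : volume T ≠ ⊤) (ξ₁ ξ₂ : ℝ) :
    ‖fourierW (fun x => H ^ 2 / Real.pi * ∫ y in T, Real.exp (-(‖y - x‖ ^ 2 * H ^ 2))) ξ₁ ξ₂‖
      ≤ (volume T).toReal * Real.exp (-(Real.pi ^ 2 * (ξ₁ ^ 2 + ξ₂ ^ 2) / H ^ 2)) := by
  have hH0 : 0 < H := lt_of_lt_of_le one_pos hH
  have hpi := Real.pi_pos
  set b : ℂ := (H : ℂ) ^ 2 with hbdef
  have hb : 0 < b.re := by
    simp only [hbdef, ← Complex.ofReal_pow, Complex.ofReal_re]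
    positivity
  -- the frequency vector
  set w : V := (WithLp.equiv 2 (Fin 2 → ℝ)).symm ![ξ₁, ξ₂] with hw
  have hw0 : w 0 = ξ₁ := rfl
  have hw1 : w 1 = ξ₂ := rfl
  have hinner : ∀ v : V, ⟪w, v⟫ = ξ₁ * v 0 + ξ₂ * v 1 := by
    intro v
    simp [PiLp.inner_apply, Fin.sum_univ_two, hw0, hw1, RCLike.inner_apply]
    ring
  have hnormw : ‖w‖ ^ 2 = ξ₁ ^ 2 + ξ₂ ^ 2 := by
    rw [← real_inner_self_eq_norm_sq, hinner, hw0, hw1]; ring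
  set E : V → ℂ := Ephase ξ₁ ξ₂ with hE
  -- step A
  have hpt : ∀ x : V,
      ((H ^ 2 / Real.pi * ∫ y in T, Real.exp (-(‖y - x‖ ^ 2 * H ^ 2)) : ℝ) : ℂ)
        = ((H ^ 2 / Real.pi : ℝ) : ℂ) * ∫ y in T, Complex.exp (-b * (‖x - y‖ : ℂ) ^ 2) := by
    intro x
    rw [Complex.ofReal_mul]
    congr 1
    calc ((∫ y in T, Real.exp (-(‖y - x‖ ^ 2 * H ^ 2)) : ℝ) : ℂ)
        = ∫ y in T, ((Real.exp (-(‖y - x‖ ^ 2 * H ^ 2)) : ℝ) : ℂ) :=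
          (integral_ofReal (𝕜 := ℂ)).symm
      _ = ∫ y in T, Complex.exp (-b * (‖x - y‖ : ℂ) ^ 2) := by
          apply integral_congr_ae
          apply Filter.Eventually.of_forall
          intro y
          show ((Real.exp (-(‖y - x‖ ^ 2 * H ^ 2)) : ℝ) : ℂ)
              = Complex.exp (-b * (‖x - y‖ : ℂ) ^ 2)
          rw [Complex.ofReal_exp]
          congr 1
          rw [norm_sub_rev x y]
          push_cast
          ring
  have stepA : fourierW (fun x => H ^ 2 / Real.pi * ∫ y in T,
        Real.exp (-(‖y - x‖ ^ 2 * H ^ 2))) ξ₁ ξ₂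
      = ((H ^ 2 / Real.pi : ℝ) : ℂ) *
          ∫ x, (∫ y in T, Complex.exp (-b * (‖x - y‖ : ℂ) ^ 2)) * E x := by
    rw [fourierW_eq, ← integral_const_mul]
    apply integral_congr_ae
    apply Filter.Eventually.of_forall
    intro x
    show ((H ^ 2 / Real.pi * ∫ y in T, Real.exp (-(‖y - x‖ ^ 2 * H ^ 2)) : ℝ) : ℂ) * E x
        = ((H ^ 2 / Real.pi : ℝ) : ℂ) *
            ((∫ y in T, Complex.exp (-b * (‖x - y‖ : ℂ) ^ 2)) * E x)
    rw [hpt x, mul_assoc]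

  -- step B
  have stepB : (∫ x, (∫ y in T, Complex.exp (-b * (‖x - y‖ : ℂ) ^ 2)) * E x)
      = ∫ x, ∫ y in T, Complex.exp (-b * (‖x - y‖ : ℂ) ^ 2) * E x := by
    apply integral_congr_ae
    apply Filter.Eventually.of_forall
    intro x
    exact (integral_mul_const (E x) _).symm
  -- the Gaussian is integrable
  have hGint : Integrable (fun v : V => Complex.exp (-b * (‖v‖ : ℂ) ^ 2)) := by
    have h := GaussianFourier.integrable_cexp_neg_mul_sq_norm_add hb 0 (0 : V)
    simpa using h
  set F : V → V → ℂ := fun y x => Complex.exp (-b * (‖x - y‖ : ℂ) ^ 2) * E x with hF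
  have hFcont : Continuous (Function.uncurry F) := by
    apply Continuous.mul
    · apply Complex.continuous_exp.comp
      have h1 : Continuous fun p : V × V => ‖p.2 - p.1‖ :=
        (continuous_snd.sub continuous_fst).norm
      exact continuous_const.mul ((Complex.continuous_ofReal.comp h1).pow 2)
    · exact (Ephase_cont ξ₁ ξ₂).comp continuous_snd
  have hbddI : ∀ y : V, Integrable (F y) volume := by
    intro y
    have h1 : Integrable (fun x : V => Complex.exp (-b * (‖x - y‖ : ℂ) ^ 2)) :=
      hGint.comp_sub_right y
    have h2 : Integrable (fun x : V => E x * Complex.exp (-b * (‖x - y‖ : ℂ) ^ 2)) :=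
      h1.bdd_mul ((Ephase_cont ξ₁ ξ₂).aestronglyMeasurable)
        (c := 1) (Filter.Eventually.of_forall fun x => le_of_eq (Ephase_norm ξ₁ ξ₂ x))
    exact h2.congr (Filter.Eventually.of_forall fun x => mul_comm _ _)
  have hFnorm : ∀ y x : V, ‖F y x‖ = Real.exp (-(H ^ 2) * ‖x - y‖ ^ 2) := by
    intro y x
    show ‖Complex.exp (-b * (‖x - y‖ : ℂ) ^ 2) * E x‖ = _
    rw [norm_mul, Ephase_norm ξ₁ ξ₂ x, mul_one, Complex.norm_exp]
    congr 1
    have h3 : -b * (‖x - y‖ : ℂ) ^ 2 = ((-(H ^ 2) * ‖x - y‖ ^ 2 : ℝ) : ℂ) := by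
      rw [hbdef]; push_cast; ring
    rw [h3, Complex.ofReal_re]
  set κ : ℝ := ∫ x : V, Real.exp (-(H ^ 2) * ‖x‖ ^ 2) with hκ
  have hshift : ∀ y : V, (∫ x : V, Real.exp (-(H ^ 2) * ‖x - y‖ ^ 2)) = κ := by
    intro y
    rw [hκ]
    have h4 := integral_add_right_eq_self (μ := volume)
      (fun v : V => Real.exp (-(H ^ 2) * ‖v‖ ^ 2)) (-y)
    simp only [← sub_eq_add_neg] at h4
    exact h4
  have hint : Integrable (Function.uncurry F) ((volume.restrict T).prod volume) := by
    rw [integrable_prod_iff hFcont.aestronglyMeasurable]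
    constructor
    · exact Filter.Eventually.of_forall hbddI
    · have h5 : (fun y => ∫ x, ‖Function.uncurry F (y, x)‖) = fun _ => κ := by
        funext y
        show (∫ x, ‖F y x‖) = κ
        simp only [hFnorm]
        exact hshift y
      rw [h5]
      exact integrableOn_const hfin
  have hswap : (∫ x, ∫ y in T, Complex.exp (-b * (‖x - y‖ : ℂ) ^ 2) * E x)
      = ∫ y in T, ∫ x, Complex.exp (-b * (‖x - y‖ : ℂ) ^ 2) * E x :=
    (integral_integral_swap hint).symm
  -- step D: compute the inner integral
  have hKval := GaussianFourier.integral_cexp_neg_mul_sq_norm_add hb (-(2 * Real.pi * Complex.I)) w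
  set K : ℂ := ((Real.pi : ℂ) / b) ^ ((Module.finrank ℝ V : ℂ) / 2) *
      Complex.exp ((-(2 * (Real.pi : ℂ) * Complex.I)) ^ 2 * ((‖w‖ : ℂ)) ^ 2 / (4 * b)) with hK
  have hDpt : ∀ x : V, Complex.exp (-b * (‖x‖ : ℂ) ^ 2) * E x
      = Complex.exp (-b * (‖x‖ : ℂ) ^ 2 + (-(2 * ↑Real.pi * Complex.I)) * ((⟪w, x⟫ : ℝ) : ℂ)) := by
    intro x
    rw [hE, Ephase, ← Complex.exp_add]
    congr 1
    rw [hinner x]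
    push_cast
    ring
  have h3 : (∫ x : V, Complex.exp (-b * (‖x‖ : ℂ) ^ 2) * E x) = K := by
    rw [show (fun x : V => Complex.exp (-b * (‖x‖ : ℂ) ^ 2) * E x)
        = fun x : V => Complex.exp (-b * (‖x‖ : ℂ) ^ 2
            + (-(2 * ↑Real.pi * Complex.I)) * ((⟪w, x⟫ : ℝ) : ℂ)) from funext hDpt]
    exact hKval
  have stepD : ∀ y : V, (∫ x, Complex.exp (-b * (‖x - y‖ : ℂ) ^ 2) * E x) = E y * K := by
    intro y
    have h1 : (∫ x, Complex.exp (-b * (‖x - y‖ : ℂ) ^ 2) * E x)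
        = ∫ x, Complex.exp (-b * (‖(x + y) - y‖ : ℂ) ^ 2) * E (x + y) :=
      (integral_add_right_eq_self
        (fun x => Complex.exp (-b * (‖x - y‖ : ℂ) ^ 2) * E x) y).symm
    rw [h1]
    have h2 : (fun x : V => Complex.exp (-b * (‖(x + y) - y‖ : ℂ) ^ 2) * E (x + y))
        = fun x : V => (Complex.exp (-b * (‖x‖ : ℂ) ^ 2) * E x) * E y := by
      funext x
      rw [add_sub_cancel_right, hE, Ephase_add, ← mul_assoc]
    rw [h2, integral_mul_const, h3, mul_comm]

  have hwsq : ((‖w‖ : ℂ)) ^ 2 = ((ξ₁ ^ 2 + ξ₂ ^ 2 : ℝ) : ℂ) := by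
    rw [← hnormw]; push_cast; ring
  have hKnorm : ‖K‖ = Real.pi / H ^ 2 * Real.exp (-(Real.pi ^ 2 * (ξ₁ ^ 2 + ξ₂ ^ 2) / H ^ 2)) := by
    rw [hK, norm_mul]
    have hfr : ((Module.finrank ℝ (EuclideanSpace ℝ (Fin 2)) : ℂ)) / 2 = 1 := by
      rw [finrank_euclideanSpace_fin]; norm_num
    rw [hfr, Complex.cpow_one]
    have h1 : ((Real.pi : ℂ) / b) = ((Real.pi / H ^ 2 : ℝ) : ℂ) := by
      rw [hbdef]; push_cast; ring
    have h2 : (-(2 * (Real.pi : ℂ) * Complex.I)) ^ 2 * ((‖w‖ : ℂ)) ^ 2 / (4 * b)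
        = ((-(Real.pi ^ 2 * (ξ₁ ^ 2 + ξ₂ ^ 2) / H ^ 2) : ℝ) : ℂ) := by
      have hI : (-(2 * (Real.pi : ℂ) * Complex.I)) ^ 2 = ((-4 * Real.pi ^ 2 : ℝ) : ℂ) := by
        rw [neg_sq, mul_pow, mul_pow, Complex.I_sq]
        push_cast
        ring
      rw [hI, hwsq, hbdef]
      have hHne : ((H : ℂ)) ≠ 0 := by
        norm_cast
        exact hH0.ne'
      push_cast
      field_simp
    rw [h1, h2, Complex.norm_real, Complex.norm_exp, Complex.ofReal_re,
      Real.norm_eq_abs, abs_of_pos (by positivity)]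
  have hTi : (∫ y in T, ∫ x, Complex.exp (-b * (‖x - y‖ : ℂ) ^ 2) * E x)
      = ∫ y in T, E y * K :=
    integral_congr_ae (Filter.Eventually.of_forall stepD)
  have hintbound : ‖∫ y in T, E y * K‖ ≤ ‖K‖ * (volume T).toReal := by
    apply norm_setIntegral_le_of_norm_le_const (lt_top_iff_ne_top.2 hfin)
    · intro y _
      rw [norm_mul, hE, Ephase_norm, one_mul]
  rw [stepA, stepB, hswap, hTi, norm_mul]
  calc ‖((H ^ 2 / Real.pi : ℝ) : ℂ)‖ * ‖∫ y in T, E y * K‖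
      ≤ ‖((H ^ 2 / Real.pi : ℝ) : ℂ)‖ * (‖K‖ * (volume T).toReal) :=
        mul_le_mul_of_nonneg_left hintbound (norm_nonneg _)
    _ = (volume T).toReal * Real.exp (-(Real.pi ^ 2 * (ξ₁ ^ 2 + ξ₂ ^ 2) / H ^ 2)) := by
        rw [hKnorm, Complex.norm_real, Real.norm_eq_abs, abs_of_pos (by positivity)]
        field_simp

theorem fourier_weight_decay (c : ℝ) (hc : 0 < c) (N : ℕ) :
    ∃ C : ℝ, 0 < C ∧ ∀ H : ℝ, 1 ≤ H → ∀ S : Set (EuclideanSpace ℝ (Fin 2)),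
      MeasurableSet S → (∀ y ∈ S, ∀ i, |y i| ≤ c) →
      ∀ ξ₁ ξ₂ : ℝ, 0 < max |ξ₁| |ξ₂| →
        ‖fourierW (wplus H S) ξ₁ ξ₂‖ ≤ C * H ^ (2 * N) / max |ξ₁| |ξ₂| ^ N ∧
        ‖fourierW (wminus H S) ξ₁ ξ₂‖ ≤ C * H ^ (2 * N) / max |ξ₁| |ξ₂| ^ N := by
  set R : ℝ := 2 * c + 1 with hR
  set vB : ℝ := (volume (Metric.closedBall (0 : EuclideanSpace ℝ (Fin 2)) R)).toReal with hvB
  have hvB0 : 0 ≤ vB := ENNReal.toReal_nonneg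
  refine ⟨(vB + 1) * ((Nat.factorial N) + 1), by positivity, ?_⟩
  intro H hH S hSmeas hSbox ξ₁ ξ₂ hξ
  set M : ℝ := max |ξ₁| |ξ₂| with hM
  have hH0 : 0 < H := lt_of_lt_of_le one_pos hH
  have hball : ∀ y ∈ S, y ∈ Metric.closedBall (0 : V) (2 * c) := by
    intro y hy
    rw [Metric.mem_closedBall, dist_zero_right]
    have h0 := hSbox y hy 0
    have h1 := hSbox y hy 1
    rw [EuclideanSpace.norm_eq, Fin.sum_univ_two]
    have hle : Real.sqrt (‖y 0‖ ^ 2 + ‖y 1‖ ^ 2) ≤ Real.sqrt ((2 * c) ^ 2) := by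
      apply Real.sqrt_le_sqrt
      rw [Real.norm_eq_abs, Real.norm_eq_abs]
      nlinarith [abs_nonneg (y 0), abs_nonneg (y 1)]
    exact hle.trans_eq (Real.sqrt_sq (by positivity))
  have hrad0 : (0 : ℝ) ≤ 1 / Real.sqrt H := by positivity
  have hrad : 1 / Real.sqrt H ≤ 1 := by
    rw [div_le_one (Real.sqrt_pos.2 hH0)]
    nlinarith [Real.sq_sqrt hH0.le, Real.sqrt_nonneg H]
  have hplus_sub : Splus H S ⊆ Metric.closedBall (0 : V) R := by
    intro z hz
    rw [Splus, Set.mem_iUnion₂] at hz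
    obtain ⟨x, hxS, hzx⟩ := hz
    rw [Metric.mem_closedBall] at hzx ⊢
    have hx0 := hball x hxS
    rw [Metric.mem_closedBall] at hx0
    calc dist z 0 ≤ dist z x + dist x 0 := dist_triangle _ _ _
      _ ≤ 1 / Real.sqrt H + 2 * c := add_le_add hzx hx0
      _ ≤ R := by rw [hR]; linarith
  have hminus_sub : Sminus H S ⊆ Metric.closedBall (0 : V) R := by
    intro z hz
    have hzS : z ∈ S := by
      by_contra hzS
      apply hz
      exact Set.mem_biUnion hzS (Metric.mem_closedBall_self hrad0)
    exact Metric.closedBall_subset_closedBall (by rw [hR]; linarith)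
      (hball z hzS)
  have hM0 : 0 < M := hξ
  have hMsq : M ^ 2 ≤ ξ₁ ^ 2 + ξ₂ ^ 2 := by
    rcases max_cases |ξ₁| |ξ₂| with ⟨h, _⟩ | ⟨h, _⟩ <;> rw [hM, h] <;>
      nlinarith [_root_.sq_abs ξ₁, _root_.sq_abs ξ₂, sq_nonneg ξ₁, sq_nonneg ξ₂]
  have key : ∀ s : Set V, s ⊆ Metric.closedBall (0 : V) R →
      ‖fourierW (fun x => H ^ 2 / Real.pi * ∫ y in s,
          Real.exp (-(‖y - x‖ ^ 2 * H ^ 2))) ξ₁ ξ₂‖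
        ≤ (vB + 1) * ((Nat.factorial N) + 1) * H ^ (2 * N) / M ^ N := by
    intro s hs
    obtain ⟨T, hTm, hTsub, hTeq⟩ := restrict_hull s hs
    have heq : (fun x : V => H ^ 2 / Real.pi * ∫ y in s,
          Real.exp (-(‖y - x‖ ^ 2 * H ^ 2)))
        = fun x : V => H ^ 2 / Real.pi * ∫ y in T,
            Real.exp (-(‖y - x‖ ^ 2 * H ^ 2)) := by
      funext x
      rw [hTeq]
    rw [heq]
    have hTball : volume T ≤ volume (Metric.closedBall (0 : V) R) :=
      measure_mono hTsub
    have hTfin : volume T ≠ ⊤ :=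
      (hTball.trans_lt measure_closedBall_lt_top).ne
    have h1 := core H hH T hTm hTfin ξ₁ ξ₂
    have h2 : (volume T).toReal ≤ vB := by
      rw [hvB]
      exact ENNReal.toReal_mono measure_closedBall_lt_top.ne hTball
    calc ‖fourierW (fun x : V => H ^ 2 / Real.pi * ∫ y in T,
            Real.exp (-(‖y - x‖ ^ 2 * H ^ 2))) ξ₁ ξ₂‖
        ≤ (volume T).toReal * Real.exp (-(Real.pi ^ 2 * (ξ₁ ^ 2 + ξ₂ ^ 2) / H ^ 2)) := h1
      _ ≤ vB * Real.exp (-(Real.pi ^ 2 * M ^ 2 / H ^ 2)) := by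
          apply mul_le_mul h2 _ (Real.exp_pos _).le hvB0
          apply Real.exp_le_exp.2
          rw [neg_le_neg_iff]
          gcongr
      _ ≤ vB * ((Nat.factorial N + 1 : ℝ) * H ^ (2 * N) / M ^ N) := by
          exact mul_le_mul_of_nonneg_left (exp_decay_bound N hH hM0) hvB0
      _ ≤ (vB + 1) * ((Nat.factorial N) + 1) * H ^ (2 * N) / M ^ N := by
          rw [show vB * ((Nat.factorial N + 1 : ℝ) * H ^ (2 * N) / M ^ N)
              = vB * (Nat.factorial N + 1 : ℝ) * H ^ (2 * N) / M ^ N from by ring]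
          gcongr
          linarith
  exact ⟨key (Splus H S) hplus_sub, key (Sminus H S) hminus_sub⟩
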